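/- arXiv:2502.20374 — 2 statements merged into one kernel-verified Lean document; each statement's English description precedes it below -/
import Mathlib

section
/- Trace preservation of iterated DQE instruments: let K be Hermitian with [K, P₀] = 0 and ‖K‖ ≤ 1, let P_x be orthogonal projectors summing to I with P₀P_x = 0 for x ≠ 0, and let U_x be unitaries with U_x P_x U_x† = P₀ (U₀ = I). Define ℰ₀(ρ) = ∑_x K U_x P_x ρ P_x U_x† K and ℰ₁(ρ) = (1 - tr ℰ₀(ρ))·P₀/2^{n-k}, and ℰ = ℰ₀ + ℰ₁. Then for every density matrix ρ and every t ≥ 1, tr(P₀ ℰ^t(ρ) P₀) = tr(ℰ^t(ρ)) = 1; i.e., the output of any number of iterations is supported entirely on the codespace. -/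
open scoped Matrix.Norms.L2Operator ComplexOrder

/-- trace preservation and codespace support of iterated DQE
instruments: with syndrome projectors `P x` summing to the identity, recovery
unitaries `U x` with `U x * P x * (U x)† = P x₀` (`U x₀ = I`), and a positive
semidefinite contraction `K` commuting with the codespace projector `P x₀` of rank
`2^(n-k)`, the map `ℰ(ρ) = ℰ₀(ρ) + (1 - tr ℰ₀(ρ)) P₀/2^{n-k}` (with
`ℰ₀(ρ) = ∑ₓ K Uₓ Pₓ ρ Pₓ Uₓ† K`) satisfies
`tr(P₀ ℰᵗ(ρ) P₀) = tr(ℰᵗ(ρ)) = 1` for every density matrix `ρ` and every `t ≥ 1`. -/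
theorem dqe_instruments_trace_preserving
    {n k : ℕ} (hkn : k ≤ n) {X : Type*} [Fintype X] [DecidableEq X] (x0 : X)
    (P : X → Matrix (Fin (2 ^ n)) (Fin (2 ^ n)) ℂ)
    (hPsum : ∑ x, P x = 1)
    (hPherm : ∀ x, (P x).IsHermitian)
    (hPidem : ∀ x, P x * P x = P x)
    (hPorth : ∀ x y, x ≠ y → P x * P y = 0)
    (hrank : (P x0).trace = (2 ^ (n - k) : ℂ))
    (U : X → Matrix (Fin (2 ^ n)) (Fin (2 ^ n)) ℂ)
    (hUunit : ∀ x, U x ∈ Matrix.unitaryGroup (Fin (2 ^ n)) ℂ)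
    (hU0 : U x0 = 1)
    (hUconj : ∀ x, U x * P x * star (U x) = P x0)
    (K : Matrix (Fin (2 ^ n)) (Fin (2 ^ n)) ℂ)
    (hKpsd : K.PosSemidef) (hKnorm : ‖K‖ ≤ 1)
    (hKcomm : K * P x0 = P x0 * K)
    (E : Matrix (Fin (2 ^ n)) (Fin (2 ^ n)) ℂ → Matrix (Fin (2 ^ n)) (Fin (2 ^ n)) ℂ)
    (hE : E = fun ρ =>
      (∑ x, K * U x * P x * ρ * P x * star (U x) * K) +
        ((1 - (∑ x, K * U x * P x * ρ * P x * star (U x) * K).trace) •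
          ((2 ^ (n - k) : ℂ)⁻¹ • P x0)))
    (ρ : Matrix (Fin (2 ^ n)) (Fin (2 ^ n)) ℂ)
    (hρ : ρ.PosSemidef) (hρtr : ρ.trace = 1) :
    ∀ t : ℕ, 1 ≤ t →
      (P x0 * (E^[t] ρ) * P x0).trace = 1 ∧ (E^[t] ρ).trace = 1 := by
  have hP0 : P x0 * P x0 = P x0 := hPidem x0
  have hUP : ∀ x, U x * P x = P x0 * U x := by
    intro x
    have h1 : star (U x) * U x = 1 := (hUunit x).1
    calc U x * P x = U x * P x * (star (U x) * U x) := by rw [h1, mul_one]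
      _ = (U x * P x * star (U x)) * U x := by simp only [mul_assoc]
      _ = P x0 * U x := by rw [hUconj]
  have key : ∀ x, K * U x * P x = P x0 * (K * U x) := by
    intro x
    rw [mul_assoc, hUP x, ← mul_assoc, hKcomm, mul_assoc]
  have key2 : ∀ x, P x * star (U x) * K = star (U x) * K * P x0 := by
    intro x
    have := congrArg star (hUP x)
    simp only [StarMul.star_mul, Matrix.star_eq_conjTranspose, (hPherm x).eq,
      (hPherm x0).eq] at this
    simp only [Matrix.star_eq_conjTranspose]
    rw [this, mul_assoc, ← hKcomm, ← mul_assoc]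
  have base : ∀ x (σ : Matrix (Fin (2 ^ n)) (Fin (2 ^ n)) ℂ),
      K * U x * P x * σ * P x * star (U x) * K
        = P x0 * (K * U x * σ * (star (U x) * K)) * P x0 := by
    intro x σ
    calc K * U x * P x * σ * P x * star (U x) * K
        = (K * U x * P x) * σ * (P x * star (U x) * K) := by simp only [mul_assoc]
      _ = (P x0 * (K * U x)) * σ * (star (U x) * K * P x0) := by rw [key, key2]
      _ = P x0 * (K * U x * σ * (star (U x) * K)) * P x0 := by simp only [mul_assoc]
  have hterm : ∀ x (σ : Matrix (Fin (2 ^ n)) (Fin (2 ^ n)) ℂ),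
      P x0 * (K * U x * P x * σ * P x * star (U x) * K) * P x0
        = K * U x * P x * σ * P x * star (U x) * K := by
    intro x σ
    rw [base]
    simp only [← mul_assoc]
    rw [hP0, mul_assoc _ (P x0) (P x0), hP0]
  have hsupp : ∀ σ, P x0 * E σ * P x0 = E σ := by
    intro σ
    rw [hE]
    simp only
    rw [mul_add, add_mul]
    congr 1
    · rw [Finset.mul_sum, Finset.sum_mul]
      exact Finset.sum_congr rfl fun x _ => hterm x σ
    · rw [Matrix.mul_smul, Matrix.mul_smul, Matrix.smul_mul, Matrix.smul_mul]
      rw [mul_assoc, hP0, hP0]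
  have htr : ∀ σ, (E σ).trace = 1 := by
    intro σ
    rw [hE]
    simp only
    rw [Matrix.trace_add, Matrix.trace_smul, Matrix.trace_smul, hrank]
    have h2 : (2 ^ (n - k) : ℂ) ≠ 0 := by positivity
    rw [smul_eq_mul, smul_eq_mul, inv_mul_cancel₀ h2]
    ring
  intro t ht
  obtain ⟨s, rfl⟩ : ∃ s, t = s + 1 := ⟨t - 1, (Nat.succ_pred_eq_of_pos ht).symm⟩
  rw [Function.iterate_succ_apply']
  exact ⟨by rw [hsupp, htr], htr _⟩
end

section
/- Block spectral gap of the dissipative computation transfer matrix: let S_k be the (T+1)×(T+1) symmetric tridiagonal matrix with entries (S_k)_{0,0} = k/(2N), (S_k)_{T,T} = 1/2, (S_k)_{t,t+1} = (S_k)_{t+1,t} = 1/2 for 0 ≤ t ≤ T-1, and all other entries 0. Then: (a) S_N (i.e., k = N) has largest eigenvalue 1, attained by a unique (up to scale) eigenvector, and second-largest eigenvalue cos(π/(T+1)); (b) S_0 has largest eigenvalue cos(π/(2T+3)). Consequently the spectral gap of S_N is 1 - cos(π/(T+1)) = Θ(T^{-2}). -/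
open Real

/-- The `(T+1) × (T+1)` symmetric tridiagonal block `S_k`: diagonal entries
`k/(2N)` at `(0,0)`, `1/2` at `(T,T)`, zero elsewhere on the diagonal, and `1/2`
on the super- and sub-diagonals. -/
noncomputable def Sblock (N T k : ℕ) : Matrix (Fin (T + 1)) (Fin (T + 1)) ℝ :=
  Matrix.of fun i j =>
    if (i : ℕ) = (j : ℕ) then
      (if (i : ℕ) = 0 then (k : ℝ) / (2 * N) else if (i : ℕ) = T then 1 / 2 else 0)
    else if (i : ℕ) + 1 = (j : ℕ) ∨ (j : ℕ) + 1 = (i : ℕ) then 1 / 2 else 0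

noncomputable def wext (T : ℕ) (v : Fin (T+1) → ℝ) : ℕ → ℝ :=
  fun t => if h : t < T + 1 then v ⟨t, h⟩ else 0

lemma wext_eq (T : ℕ) (v : Fin (T+1) → ℝ) (i : Fin (T+1)) : wext T v i = v i := by
  simp [wext, i.isLt]

lemma wext_eq' (T : ℕ) (v : Fin (T+1) → ℝ) {t : ℕ} (ht : t < T + 1) :
    wext T v t = v ⟨t, ht⟩ := by simp [wext, ht]

lemma wext_zero (T : ℕ) (v : Fin (T+1) → ℝ) {t : ℕ} (ht : T < t) : wext T v t = 0 := by
  have : ¬ (t < T + 1) := by omega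
  simp [wext, this]

lemma Sblock_mulVec (N T k : ℕ) (v : Fin (T+1) → ℝ) (i : Fin (T+1)) :
    (Sblock N T k).mulVec v i =
      (if (i : ℕ) = 0 then (k : ℝ) / (2 * N) else if (i : ℕ) = T then 1/2 else 0) * v i
      + (1/2) * wext T v ((i : ℕ) + 1)
      + (if 1 ≤ (i : ℕ) then (1/2) * wext T v ((i : ℕ) - 1) else 0) := by
  have key : ∀ j : Fin (T+1), Sblock N T k i j * v j =
      (if j = i then (if (i:ℕ) = 0 then (k : ℝ) / (2 * N) else if (i:ℕ) = T then 1/2 else 0) * v j else 0)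
      + (if (j : ℕ) = (i:ℕ) + 1 then (1/2) * v j else 0)
      + (if (j : ℕ) + 1 = (i:ℕ) then (1/2) * v j else 0) := by
    intro j
    simp only [Sblock, Matrix.of_apply, Fin.ext_iff]
    split_ifs <;> first | ring1 | omega
  have hsum : (Sblock N T k).mulVec v i = ∑ j : Fin (T+1), Sblock N T k i j * v j := rfl
  rw [hsum, Finset.sum_congr rfl (fun j _ => key j), Finset.sum_add_distrib,
    Finset.sum_add_distrib]
  congr 1
  · congr 1
    · rw [Finset.sum_ite_eq' Finset.univ i]
      simp
    · by_cases h : (i:ℕ) + 1 < T + 1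
      · have heq : ∀ j : Fin (T+1), ((j : ℕ) = (i:ℕ) + 1) = (j = ⟨(i:ℕ)+1, h⟩) := by
          intro j; simp [Fin.ext_iff]
        simp_rw [heq]
        rw [Finset.sum_ite_eq' Finset.univ (⟨(i:ℕ)+1, h⟩ : Fin (T+1))]
        have h' : (i:ℕ) + 1 < T + 1 := h
        simp [wext, h']
      · have hz : wext T v ((i:ℕ) + 1) = 0 := wext_zero T v (by omega)
        rw [hz]
        have hne : ∀ j : Fin (T+1), ¬ ((j : ℕ) = (i:ℕ) + 1) := by
          intro j; have := j.isLt; omega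
        simp [hne]
  · by_cases h : 1 ≤ (i:ℕ)
    · have hlt : (i:ℕ) - 1 < T + 1 := by have := i.isLt; omega
      have heq : ∀ j : Fin (T+1), ((j : ℕ) + 1 = (i:ℕ)) = (j = ⟨(i:ℕ)-1, hlt⟩) := by
        intro j; simp [Fin.ext_iff]; omega
      simp_rw [heq]
      rw [Finset.sum_ite_eq' Finset.univ (⟨(i:ℕ)-1, hlt⟩ : Fin (T+1))]
      simp [h, wext, hlt]
    · have hne : ∀ j : Fin (T+1), ¬ ((j : ℕ) + 1 = (i:ℕ)) := by
        intro j; omega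
      simp [hne, h]

lemma matrix_mem_spectrum_iff {n : ℕ} (A : Matrix (Fin n) (Fin n) ℝ) (μ : ℝ) :
    μ ∈ spectrum ℝ A ↔ ∃ v : Fin n → ℝ, v ≠ 0 ∧ A.mulVec v = μ • v := by
  rw [← AlgEquiv.spectrum_eq (Matrix.toLinAlgEquiv' : Matrix (Fin n) (Fin n) ℝ ≃ₐ[ℝ] _) A,
    ← Module.End.hasEigenvalue_iff_mem_spectrum]
  constructor
  · intro h
    obtain ⟨v, hv⟩ := h.exists_hasEigenvector
    exact ⟨v, hv.2, by simpa [Matrix.toLinAlgEquiv'_apply] using hv.apply_eq_smul⟩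
  · rintro ⟨v, hv0, heq⟩
    refine Module.End.hasEigenvalue_of_hasEigenvector ⟨?_, hv0⟩
    rw [Module.End.mem_eigenspace_iff]
    simpa [Matrix.toLinAlgEquiv'_apply] using heq

lemma rows_of_mulVec_eq {N T k : ℕ} {μ : ℝ} {v : Fin (T+1) → ℝ}
    (h : (Sblock N T k).mulVec v = μ • v) (t : ℕ) (ht : t < T + 1) :
    (if t = 0 then (k : ℝ) / (2 * N) else if t = T then 1/2 else 0) * wext T v t
      + (1/2) * wext T v (t+1)
      + (if 1 ≤ t then (1/2) * wext T v (t-1) else 0) = μ * wext T v t := by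
  have hi := congrFun h ⟨t, ht⟩
  rw [Sblock_mulVec] at hi
  rw [wext_eq' T v ht]
  simpa using hi

/-- generic two–term recurrence uniqueness -/
lemma closed_form {T : ℕ} {μ : ℝ} {w f : ℕ → ℝ}
    (h0 : w 0 = f 0) (h1 : w 1 = f 1)
    (hw : ∀ t, 1 ≤ t → t + 1 ≤ T → w (t+1) = 2*μ*w t - w (t-1))
    (hf : ∀ t, 1 ≤ t → f (t+1) = 2*μ*f t - f (t-1)) :
    ∀ t, t ≤ T → w t = f t := by
  intro t
  induction t using Nat.strong_induction_on with
  | _ t ih =>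
    intro htT
    match t with
    | 0 => exact h0
    | 1 => exact h1
    | (s+2) =>
      have hw' := hw (s+1) (by omega) (by omega)
      have hf' := hf (s+1) (by omega)
      simp only [Nat.add_sub_cancel] at hw' hf'
      rw [hw', ih (s+1) (by omega) (by omega), ih s (by omega) (by omega), ← hf']

/-- all eigenvalues of `Sblock` are at most 1 in absolute value (when the corner entry
is between 0 and 1/2). -/
lemma Sblock_spectrum_abs_le_one {N T k : ℕ} (hT : 1 ≤ T)
    (hk0 : 0 ≤ (k : ℝ) / (2 * N)) (hk : (k : ℝ) / (2 * N) ≤ 1/2)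
    {μ : ℝ} (hμ : μ ∈ spectrum ℝ (Sblock N T k)) : |μ| ≤ 1 := by
  rw [matrix_mem_spectrum_iff] at hμ
  obtain ⟨v, hv0, hmv⟩ := hμ
  obtain ⟨i₀, -, hmax⟩ := Finset.exists_max_image Finset.univ (fun j => |v j|)
    ⟨0, Finset.mem_univ 0⟩
  set m := |v i₀| with hm
  have hmpos : 0 < m := by
    rcases Function.ne_iff.mp hv0 with ⟨j, hj⟩
    have : 0 < |v j| := abs_pos.mpr hj
    exact lt_of_lt_of_le this (hmax j (Finset.mem_univ j))
  have hwb : ∀ s, |wext T v s| ≤ m := by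
    intro s
    by_cases h : s < T + 1
    · rw [wext_eq' T v h]; exact hmax _ (Finset.mem_univ _)
    · rw [wext_zero T v (by omega)]; simpa using hmpos.le
  have hi := congrFun hmv i₀
  rw [Sblock_mulVec] at hi
  have hμm : |μ| * m ≤ 1 * m := by
    have hrhs : |μ * v i₀| = |μ| * m := by rw [abs_mul, hm]
    have h1 : |μ| * m = |(Sblock N T k).mulVec v i₀| := by
      rw [← hrhs]
      congr 1
      rw [hmv]; simp
    rw [Sblock_mulVec] at h1
    set D := (if (i₀ : ℕ) = 0 then (k : ℝ) / (2 * N) else if (i₀ : ℕ) = T then 1/2 else 0) with hD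
    have hDb : 0 ≤ D ∧ D ≤ 1/2 := by
      rw [hD]; split_ifs <;> constructor <;> first | exact hk0 | exact hk | norm_num
    have habs1 : |D * v i₀| ≤ D * m := by
      rw [abs_mul, abs_of_nonneg hDb.1, hm]
    -- case split on position
    rw [h1]
    by_cases h0 : (i₀ : ℕ) = 0
    · -- no predecessor term
      have hnp : ¬ (1 ≤ (i₀ : ℕ)) := by omega
      rw [if_neg hnp]
      calc |D * v i₀ + 1/2 * wext T v ((i₀:ℕ)+1) + 0|
          ≤ |D * v i₀| + |1/2 * wext T v ((i₀:ℕ)+1)| := by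
            rw [add_zero]; exact abs_add_le _ _
        _ ≤ D * m + 1/2 * m := by
            refine add_le_add habs1 ?_
            rw [abs_mul]
            calc |(1:ℝ)/2| * |wext T v ((i₀:ℕ)+1)| ≤ |(1:ℝ)/2| * m := by
                  exact mul_le_mul_of_nonneg_left (hwb _) (abs_nonneg _)
              _ = 1/2 * m := by norm_num
        _ ≤ 1 * m := by nlinarith [hDb.1, hDb.2, hmpos]
    · -- predecessor term present
      have hnp : 1 ≤ (i₀ : ℕ) := by omega
      rw [if_pos hnp]
      by_cases hTi : (i₀ : ℕ) = T
      · -- successor term vanishes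
        have hsz : wext T v ((i₀:ℕ)+1) = 0 := wext_zero T v (by omega)
        rw [hsz]
        calc |D * v i₀ + 1/2 * 0 + 1/2 * wext T v ((i₀:ℕ)-1)|
            ≤ |D * v i₀| + |1/2 * wext T v ((i₀:ℕ)-1)| := by
              rw [mul_zero, add_zero]; exact abs_add_le _ _
          _ ≤ D * m + 1/2 * m := by
              refine add_le_add habs1 ?_
              rw [abs_mul]
              calc |(1:ℝ)/2| * |wext T v ((i₀:ℕ)-1)| ≤ |(1:ℝ)/2| * m :=
                    mul_le_mul_of_nonneg_left (hwb _) (abs_nonneg _)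
                _ = 1/2 * m := by norm_num
          _ ≤ 1 * m := by nlinarith [hDb.1, hDb.2, hmpos]
      · -- interior: D = 0
        have hDz : D = 0 := by rw [hD, if_neg h0, if_neg hTi]
        rw [hDz]
        calc |0 * v i₀ + 1/2 * wext T v ((i₀:ℕ)+1) + 1/2 * wext T v ((i₀:ℕ)-1)|
            ≤ |1/2 * wext T v ((i₀:ℕ)+1)| + |1/2 * wext T v ((i₀:ℕ)-1)| := by
              rw [zero_mul, zero_add]; exact abs_add_le _ _
          _ ≤ 1/2 * m + 1/2 * m := by
              refine add_le_add ?_ ?_ <;>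
              · rw [abs_mul]
                calc |(1:ℝ)/2| * _ ≤ |(1:ℝ)/2| * m :=
                      mul_le_mul_of_nonneg_left (hwb _) (abs_nonneg _)
                  _ = 1/2 * m := by norm_num
          _ ≤ 1 * m := by linarith
  exact le_of_mul_le_mul_right hμm hmpos

/-! ### trig helpers -/

lemma cos_step (θ a : ℝ) : Real.cos (a + θ) = 2 * Real.cos θ * Real.cos a - Real.cos (a - θ) := by
  rw [Real.cos_add, Real.cos_sub]; ring

lemma sin_step (θ a : ℝ) : Real.sin (a + θ) = 2 * Real.cos θ * Real.sin a - Real.sin (a - θ) := by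
  rw [Real.sin_add, Real.sin_sub]; ring

/-! ### the all-ones eigenvector of `Sblock N T N` -/

lemma Sblock_ones (N T : ℕ) (hN : 1 ≤ N) (hT : 1 ≤ T) :
    (Sblock N T N).mulVec (fun _ => (1:ℝ)) = (1:ℝ) • (fun _ => (1:ℝ)) := by
  have hNd : (N : ℝ) / (2 * N) = 1/2 := by
    have : (N:ℝ) ≠ 0 := Nat.cast_ne_zero.mpr (by omega)
    field_simp
  funext i
  rw [Sblock_mulVec]
  have hw : ∀ s, wext T (fun _ => (1:ℝ)) s = if s < T + 1 then 1 else 0 := by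
    intro s; by_cases h : s < T + 1
    · rw [wext_eq' T _ h]; simp [h]
    · rw [wext_zero T _ (by omega)]; simp [h]
  by_cases h0 : (i : ℕ) = 0
  · have h1 : (0:ℕ) + 1 < T + 1 := by omega
    have hnp : ¬ (1 ≤ (i:ℕ)) := by omega
    rw [h0] at *
    simp [h0, hnp, hw, h1, hNd]
    norm_num
  · by_cases hTi : (i : ℕ) = T
    · have hnp : 1 ≤ (i:ℕ) := by omega
      have hs : ¬ ((i:ℕ) + 1 < T + 1) := by omega
      have hp : (i:ℕ) - 1 < T + 1 := by omega
      simp [h0, hTi, hnp, hw, hs, hp]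
      rw [if_neg (by omega : ¬ T = 0), if_pos (by omega : 1 ≤ T)]
      norm_num
    · have hnp : 1 ≤ (i:ℕ) := by omega
      have hs : (i:ℕ) + 1 < T + 1 := by have := i.isLt; omega
      have hp : (i:ℕ) - 1 < T + 1 := by omega
      simp [h0, hTi, hnp, hw, hs, hp]
      norm_num

lemma ones_ne_zero (T : ℕ) : (fun _ => (1:ℝ) : Fin (T+1) → ℝ) ≠ 0 := by
  intro h
  have := congrFun h 0
  simp at this

lemma Sblock_rec {N T k : ℕ} {μ : ℝ} {v : Fin (T+1) → ℝ}
    (h : (Sblock N T k).mulVec v = μ • v) :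
    ∀ t, 1 ≤ t → t + 1 ≤ T → wext T v (t+1) = 2*μ*(wext T v t) - wext T v (t-1) := by
  intro t h1t ht1
  have hr := rows_of_mulVec_eq h t (by omega)
  rw [if_neg (by omega : ¬ t = 0)] at hr
  rw [if_neg (by omega : ¬ t = T)] at hr
  rw [if_pos h1t] at hr
  linarith

lemma Sblock_row0 {N T k : ℕ} {μ : ℝ} {v : Fin (T+1) → ℝ}
    (h : (Sblock N T k).mulVec v = μ • v) :
    ((k:ℝ)/(2*N)) * wext T v 0 + (1/2) * wext T v 1 = μ * wext T v 0 := by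
  have hr := rows_of_mulVec_eq h 0 (by omega)
  rw [if_pos rfl, if_neg (by omega : ¬ (1:ℕ) ≤ 0)] at hr
  linarith

lemma Sblock_rowT {N T k : ℕ} (hT : 1 ≤ T) {μ : ℝ} {v : Fin (T+1) → ℝ}
    (h : (Sblock N T k).mulVec v = μ • v) :
    (1/2) * wext T v T + (1/2) * wext T v (T-1) = μ * wext T v T := by
  have hr := rows_of_mulVec_eq h T (by omega)
  rw [if_neg (by omega : ¬ T = 0), if_pos rfl, if_pos hT, wext_zero T v (by omega : T < T + 1)] at hr
  linarith

lemma Sblock_eigenspace_one (N T : ℕ) (hN : 1 ≤ N) (hT : 1 ≤ T) :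
    Module.End.eigenspace (Matrix.toLin' (Sblock N T N)) 1 =
      Submodule.span ℝ {(fun _ => (1:ℝ) : Fin (T+1) → ℝ)} := by
  have hNd : (N : ℝ) / (2 * N) = 1/2 := by
    have : (N:ℝ) ≠ 0 := Nat.cast_ne_zero.mpr (by omega)
    field_simp
  apply le_antisymm
  · intro v hv
    rw [Module.End.mem_eigenspace_iff, Matrix.toLin'_apply] at hv
    have hrow0 := Sblock_row0 hv
    rw [hNd] at hrow0
    have h1 : wext T v 1 = wext T v 0 := by linarith
    have hconst : ∀ t, t ≤ T → wext T v t = wext T v 0 := by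
      refine closed_form (f := fun _ => wext T v 0) (μ := 1) rfl h1 ?_ ?_
      · intro t h1t ht1
        have := Sblock_rec hv t h1t ht1
        linarith [this]
      · intro t _; simp; ring
    rw [Submodule.mem_span_singleton]
    refine ⟨v 0, ?_⟩
    funext i
    have hi := hconst (i : ℕ) (by omega)
    rw [wext_eq] at hi
    have h00 : wext T v 0 = v 0 := by
      rw [wext_eq' T v (by omega : (0:ℕ) < T + 1)]
      congr 1
    simp only [Pi.smul_apply, smul_eq_mul, mul_one]
    rw [hi, h00]
  · rw [Submodule.span_singleton_le_iff_mem]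
    rw [Module.End.mem_eigenspace_iff, Matrix.toLin'_apply]
    exact Sblock_ones N T hN hT

lemma Sblock_finrank_one (N T : ℕ) (hN : 1 ≤ N) (hT : 1 ≤ T) :
    Module.finrank ℝ (Module.End.eigenspace (Matrix.toLin' (Sblock N T N)) 1) = 1 := by
  rw [Sblock_eigenspace_one N T hN hT]
  exact finrank_span_singleton (ones_ne_zero T)

lemma Sblock_cos_eigen (N T : ℕ) (hN : 1 ≤ N) (hT : 1 ≤ T) :
    Real.cos (π / (T + 1)) ∈ spectrum ℝ (Sblock N T N) := by
  set θ := π / ((T:ℝ) + 1) with hθdef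
  have hT1 : (0:ℝ) < (T:ℝ) + 1 := by positivity
  have hpi : ((T:ℝ) + 1) * θ = π := by rw [hθdef]; field_simp
  have hθpos : 0 < θ := by rw [hθdef]; positivity
  have hθle : θ ≤ π / 2 := by
    rw [hθdef, div_le_div_iff₀ hT1 (by norm_num)]
    have h2 : (1:ℝ) ≤ (T:ℝ) := by exact_mod_cast hT
    nlinarith [pi_pos]
  have hNd : (N : ℝ) / (2 * N) = 1/2 := by
    have : (N:ℝ) ≠ 0 := Nat.cast_ne_zero.mpr (by omega)
    field_simp
  rw [matrix_mem_spectrum_iff]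
  refine ⟨fun i => Real.cos ((((i:ℕ):ℝ) + 1/2) * θ), ?_, ?_⟩
  · intro hv0
    have h0 := congrFun hv0 ⟨0, by omega⟩
    simp only [Pi.zero_apply] at h0
    have hpos : (0:ℝ) < Real.cos ((((((⟨0, by omega⟩ : Fin (T+1)):ℕ)):ℝ) + 1/2) * θ) := by
      apply Real.cos_pos_of_mem_Ioo
      have hc : (((((⟨0, by omega⟩ : Fin (T+1)):ℕ)):ℝ)) = 0 := by norm_num
      rw [hc]
      constructor <;> nlinarith [pi_pos]
    rw [h0] at hpos
    exact lt_irrefl 0 hpos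
  · funext i
    rw [Sblock_mulVec]
    simp only [Pi.smul_apply, smul_eq_mul]
    by_cases h0 : (i : ℕ) = 0
    · rw [if_pos h0, hNd, if_neg (by omega : ¬ 1 ≤ (i:ℕ)), h0]
      rw [wext_eq' T _ (by omega : 0 + 1 < T + 1)]
      have hc1 : ((((⟨0+1, by omega⟩ : Fin (T+1)):ℕ)):ℝ) = 1 := by norm_num
      rw [hc1, Nat.cast_zero]
      have key : Real.cos ((1 + 1/2)*θ) = 2*Real.cos θ * Real.cos ((0 + 1/2)*θ)
          - Real.cos ((0 + 1/2)*θ) := by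
        have h := cos_step θ ((1/2)*θ)
        rw [show (1/2)*θ + θ = (1+1/2)*θ by ring] at h
        rw [show (1/2)*θ - θ = -((1/2)*θ) by ring, Real.cos_neg] at h
        rw [show ((0:ℝ) + 1/2)*θ = (1/2)*θ by ring]
        exact h
      linear_combination (1/2) * key
    · by_cases hTi : (i : ℕ) = T
      · rw [if_neg h0, if_pos hTi, if_pos (by omega : 1 ≤ (i:ℕ)), hTi]
        rw [wext_zero T _ (by omega : T < T + 1), mul_zero, add_zero]
        rw [wext_eq' T _ (by omega : T - 1 < T + 1)]
        have hc1 : ((((⟨T-1, by omega⟩ : Fin (T+1)):ℕ)):ℝ) = (T:ℝ) - 1 := by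
          have : ((⟨T-1, by omega⟩ : Fin (T+1)):ℕ) = T - 1 := rfl
          rw [this, Nat.cast_sub hT]; norm_num
        rw [hc1]
        set x := ((T:ℝ) + 1/2) * θ with hxdef
        have hx1 : ((T:ℝ) - 1 + 1/2) * θ = x - θ := by rw [hxdef]; ring
        rw [hx1]
        have key : Real.cos (x + θ) = Real.cos x := by
          have e1 : x + θ = π + (1/2)*θ := by rw [hxdef]; linear_combination hpi
          have e2 : x = π - (1/2)*θ := by rw [hxdef]; linear_combination hpi
          rw [e1, Real.cos_add, e2, Real.cos_sub]
          simp
        have expand : Real.cos θ * Real.cos x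
            = 1/2 * Real.cos (x + θ) + 1/2 * Real.cos (x - θ) := by
          rw [Real.cos_add, Real.cos_sub]; ring
        rw [expand, key]
      · rw [if_neg h0, if_neg hTi, if_pos (by omega : 1 ≤ (i:ℕ)), zero_mul, zero_add]
        have hiT : (i:ℕ) + 1 < T + 1 := by
          have := i.isLt; omega
        have hiP : (i:ℕ) - 1 < T + 1 := by omega
        rw [wext_eq' T _ hiT, wext_eq' T _ hiP]
        have hc1 : ((((⟨(i:ℕ)+1, hiT⟩ : Fin (T+1)):ℕ)):ℝ) = ((i:ℕ):ℝ) + 1 := by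
          have : ((⟨(i:ℕ)+1, hiT⟩ : Fin (T+1)):ℕ) = (i:ℕ) + 1 := rfl
          rw [this]; push_cast; ring
        have hc2 : ((((⟨(i:ℕ)-1, hiP⟩ : Fin (T+1)):ℕ)):ℝ) = ((i:ℕ):ℝ) - 1 := by
          have hr : ((⟨(i:ℕ)-1, hiP⟩ : Fin (T+1)):ℕ) = (i:ℕ) - 1 := rfl
          rw [hr, Nat.cast_sub (by omega : 1 ≤ (i:ℕ))]; norm_num
        rw [hc1, hc2]
        set x := (((i:ℕ):ℝ) + 1/2) * θ with hxdef
        have hx1 : (((i:ℕ):ℝ) + 1 + 1/2) * θ = x + θ := by rw [hxdef]; ring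
        have hx2 : (((i:ℕ):ℝ) - 1 + 1/2) * θ = x - θ := by rw [hxdef]; ring
        rw [hx1, hx2, Real.cos_add, Real.cos_sub]
        ring

set_option maxHeartbeats 1000000 in
lemma Sblock_second (N T : ℕ) (hN : 1 ≤ N) (hT : 1 ≤ T) {μ : ℝ}
    (hμ : μ ∈ spectrum ℝ (Sblock N T N)) (hne : μ ≠ 1) :
    μ ≤ Real.cos (π / (T + 1)) := by
  by_contra hlt
  push_neg at hlt
  set θ₁ := π / ((T:ℝ) + 1) with hθ₁def
  have hT1 : (0:ℝ) < (T:ℝ) + 1 := by positivity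
  have hpi₁ : ((T:ℝ) + 1) * θ₁ = π := by rw [hθ₁def]; field_simp
  have hθ₁pos : 0 < θ₁ := by rw [hθ₁def]; positivity
  have hθ₁le : θ₁ ≤ π / 2 := by
    rw [hθ₁def, div_le_div_iff₀ hT1 (by norm_num)]
    have h2 : (1:ℝ) ≤ (T:ℝ) := by exact_mod_cast hT
    nlinarith [pi_pos]
  have hNd : (N : ℝ) / (2 * N) = 1/2 := by
    have : (N:ℝ) ≠ 0 := Nat.cast_ne_zero.mpr (by omega)
    field_simp
  have habs : |μ| ≤ 1 :=
    Sblock_spectrum_abs_le_one hT (by rw [hNd]; norm_num) (le_of_eq hNd) hμ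
  have hle1 : μ ≤ 1 := le_trans (le_abs_self μ) habs
  have hlt1 : μ < 1 := lt_of_le_of_ne hle1 hne
  have hm1 : (-1:ℝ) ≤ μ := le_trans (Real.neg_one_le_cos θ₁) hlt.le
  set θ := Real.arccos μ with hθdef
  have hμcos : Real.cos θ = μ := Real.cos_arccos hm1 hle1
  have hθpos : 0 < θ := by rw [hθdef]; exact Real.arccos_pos.2 hlt1
  have hθlepi : θ ≤ π := by rw [hθdef]; exact Real.arccos_le_pi μ
  have hθlt : θ < θ₁ := by
    by_contra hge
    push_neg at hge
    have := Real.cos_le_cos_of_nonneg_of_le_pi hθ₁pos.le hθlepi hge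
    rw [hμcos] at this
    exact absurd (lt_of_lt_of_le hlt this) (lt_irrefl _)
  have hcoshalf : 0 < Real.cos ((1/2) * θ) := by
    apply Real.cos_pos_of_mem_Ioo
    constructor <;> nlinarith [pi_pos]
  rw [matrix_mem_spectrum_iff] at hμ
  obtain ⟨v, hv0, hmv⟩ := hμ
  set w := wext T v with hwdef
  set c := w 0 / Real.cos ((1/2) * θ) with hcdef
  set f : ℕ → ℝ := fun t => c * Real.cos (((t:ℝ) + 1/2) * θ) with hfdef
  have hcw : c * Real.cos ((1/2)*θ) = w 0 := by
    rw [hcdef, div_mul_cancel₀ _ hcoshalf.ne']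
  have hrow0 := Sblock_row0 hmv
  rw [hNd] at hrow0
  have hstep : ∀ x : ℝ, Real.cos (x + θ) = 2*μ*Real.cos x - Real.cos (x - θ) := by
    intro x; rw [cos_step θ x, hμcos]
  have h0 : w 0 = f 0 := by
    simp only [hfdef, Nat.cast_zero]
    rw [show (0:ℝ) + 1/2 = 1/2 by norm_num, ← hcw]
  have h1 : w 1 = f 1 := by
    have hw1 : w 1 = 2*μ*(w 0) - w 0 := by linarith
    have hkey1 : Real.cos ((((1:ℕ):ℝ) + 1/2) * θ)
        = 2*μ*Real.cos ((1/2)*θ) - Real.cos ((1/2)*θ) := by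
      have h := hstep ((1/2)*θ)
      rw [show (1/2)*θ + θ = (((1:ℕ):ℝ) + 1/2) * θ by push_cast; ring] at h
      rw [show (1/2)*θ - θ = -((1/2)*θ) by ring, Real.cos_neg] at h
      exact h
    simp only [hfdef]
    rw [hkey1]
    linear_combination hw1 + (1 - 2*μ) * hcw
  have hf : ∀ t, 1 ≤ t → f (t+1) = 2*μ*f t - f (t-1) := by
    intro t h1t
    simp only [hfdef]
    have hc1 : ((t+1:ℕ):ℝ) = (t:ℝ)+1 := by push_cast; ring
    have hc2 : ((t-1:ℕ):ℝ) = (t:ℝ)-1 := by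
      rw [Nat.cast_sub h1t, Nat.cast_one]
    rw [hc1, hc2]
    have h := hstep (((t:ℝ) + 1/2) * θ)
    rw [show ((t:ℝ)+1/2)*θ + θ = ((t:ℝ)+1+1/2)*θ by ring] at h
    rw [show ((t:ℝ)+1/2)*θ - θ = ((t:ℝ)-1+1/2)*θ by ring] at h
    rw [h]; ring
  have hcf : ∀ t, t ≤ T → w t = f t :=
    closed_form h0 h1 (Sblock_rec hmv) hf
  have hc0 : c ≠ 0 := by
    intro hc
    apply hv0
    funext i
    have hwi := hcf (i:ℕ) (by omega)
    have : w (i:ℕ) = v i := wext_eq T v i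
    rw [this] at hwi
    rw [hwi]
    simp [hfdef, hc]
  have hrT := Sblock_rowT hT hmv
  have hwT := hcf T le_rfl
  have hwT1 := hcf (T-1) (by omega)
  set x := ((T:ℝ) + 1/2) * θ with hxdef
  have hfT : f T = c * Real.cos x := by simp only [hfdef, hxdef]
  have hfT1 : f (T-1) = c * Real.cos (x - θ) := by
    simp only [hfdef]
    rw [Nat.cast_sub hT, Nat.cast_one]
    rw [show ((T:ℝ)-1+1/2)*θ = x - θ by rw [hxdef]; ring]
  rw [← hwdef] at hrT
  rw [hwT, hwT1, hfT, hfT1] at hrT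
  have E2 : (1/2)*Real.cos x + (1/2)*Real.cos (x-θ) = μ*Real.cos x := by
    have hc' := mul_left_cancel₀ hc0
      (show c * ((1/2)*Real.cos x + (1/2)*Real.cos (x-θ)) = c * (μ*Real.cos x) by
        linear_combination hrT)
    linear_combination hc'
  have hexp : μ * Real.cos x = 1/2*Real.cos (x+θ) + 1/2*Real.cos (x-θ) := by
    rw [← hμcos, Real.cos_add, Real.cos_sub]; ring
  have hcc : Real.cos x = Real.cos (x+θ) := by linarith [E2, hexp]
  have hsin := Real.cos_sub_cos x (x+θ)
  rw [show (x + (x+θ))/2 = ((T:ℝ)+1)*θ by rw [hxdef]; ring] at hsin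
  rw [show (x - (x+θ))/2 = -((1/2)*θ) by ring] at hsin
  rw [Real.sin_neg] at hsin
  have hzero : Real.sin (((T:ℝ)+1)*θ) * Real.sin ((1/2)*θ) = 0 := by
    linear_combination (1/2)*hcc - (1/2)*hsin
  have hs1 : 0 < Real.sin (((T:ℝ)+1)*θ) := by
    apply Real.sin_pos_of_pos_of_lt_pi
    · positivity
    · calc ((T:ℝ)+1)*θ < ((T:ℝ)+1)*θ₁ := by
            exact mul_lt_mul_of_pos_left hθlt hT1
        _ = π := hpi₁
  have hs2 : 0 < Real.sin ((1/2)*θ) := by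
    apply Real.sin_pos_of_pos_of_lt_pi
    · positivity
    · nlinarith [pi_pos]
  nlinarith [hzero, hs1, hs2]

set_option maxHeartbeats 1000000 in
lemma S0_sin_eigen (N T : ℕ) (hT : 1 ≤ T) :
    Real.cos (π / (2*T + 3)) ∈ spectrum ℝ (Sblock N T 0) := by
  set φ := π / (2*(T:ℝ) + 3) with hφdef
  have h23 : (0:ℝ) < 2*(T:ℝ) + 3 := by positivity
  have hpi : (2*(T:ℝ) + 3) * φ = π := by rw [hφdef]; field_simp
  have hφpos : 0 < φ := by rw [hφdef]; positivity
  have hφlt : φ < π / 2 := by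
    rw [hφdef, div_lt_div_iff₀ h23 (by norm_num)]
    nlinarith [pi_pos]
  rw [matrix_mem_spectrum_iff]
  refine ⟨fun i => Real.sin ((((i:ℕ):ℝ) + 1) * φ), ?_, ?_⟩
  · intro hv0
    have h0 := congrFun hv0 ⟨0, by omega⟩
    simp only [Pi.zero_apply] at h0
    have hpos : (0:ℝ) < Real.sin ((((((⟨0, by omega⟩ : Fin (T+1)):ℕ)):ℝ) + 1) * φ) := by
      have hc : (((((⟨0, by omega⟩ : Fin (T+1)):ℕ)):ℝ)) = 0 := by norm_num
      rw [hc, zero_add, one_mul]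
      exact Real.sin_pos_of_pos_of_lt_pi hφpos (by nlinarith [pi_pos])
    rw [h0] at hpos
    exact lt_irrefl 0 hpos
  · funext i
    rw [Sblock_mulVec]
    simp only [Pi.smul_apply, smul_eq_mul]
    by_cases h0 : (i : ℕ) = 0
    · rw [if_pos h0, if_neg (by omega : ¬ 1 ≤ (i:ℕ)), h0]
      rw [Nat.cast_zero, zero_div, zero_mul, zero_add, add_zero]
      rw [wext_eq' T _ (by omega : 0 + 1 < T + 1)]
      have hc1 : ((((⟨0+1, by omega⟩ : Fin (T+1)):ℕ)):ℝ) = 1 := by norm_num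
      rw [hc1]
      rw [show ((1:ℝ) + 1) * φ = 2 * φ by ring, Real.sin_two_mul]
      rw [show ((0:ℝ) + 1) * φ = φ by ring]
      ring
    · by_cases hTi : (i : ℕ) = T
      · rw [if_neg h0, if_pos hTi, if_pos (by omega : 1 ≤ (i:ℕ)), hTi]
        rw [wext_zero T _ (by omega : T < T + 1), mul_zero, add_zero]
        rw [wext_eq' T _ (by omega : T - 1 < T + 1)]
        have hc1 : ((((⟨T-1, by omega⟩ : Fin (T+1)):ℕ)):ℝ) = (T:ℝ) - 1 := by
          have hr : ((⟨T-1, by omega⟩ : Fin (T+1)):ℕ) = T - 1 := rfl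
          rw [hr, Nat.cast_sub hT]; norm_num
        rw [hc1]
        set x := ((T:ℝ) + 1) * φ with hxdef
        rw [show ((T:ℝ) - 1 + 1) * φ = x - φ by rw [hxdef]; ring]
        have key : Real.sin (x + φ) = Real.sin x := by
          have e1 : x + φ = π/2 + (1/2)*φ := by rw [hxdef]; linear_combination (1/2)*hpi
          have e2 : x = π/2 - (1/2)*φ := by rw [hxdef]; linear_combination (1/2)*hpi
          rw [e1, Real.sin_add, e2, Real.sin_sub]
          simp
        have expand : Real.cos φ * Real.sin x
            = 1/2 * Real.sin (x + φ) + 1/2 * Real.sin (x - φ) := by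
          rw [Real.sin_add, Real.sin_sub]; ring
        rw [expand, key]
      · rw [if_neg h0, if_neg hTi, if_pos (by omega : 1 ≤ (i:ℕ)), zero_mul, zero_add]
        have hiT : (i:ℕ) + 1 < T + 1 := by have := i.isLt; omega
        have hiP : (i:ℕ) - 1 < T + 1 := by omega
        rw [wext_eq' T _ hiT, wext_eq' T _ hiP]
        have hc1 : ((((⟨(i:ℕ)+1, hiT⟩ : Fin (T+1)):ℕ)):ℝ) = ((i:ℕ):ℝ) + 1 := by
          have hr : ((⟨(i:ℕ)+1, hiT⟩ : Fin (T+1)):ℕ) = (i:ℕ) + 1 := rfl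
          rw [hr]; push_cast; ring
        have hc2 : ((((⟨(i:ℕ)-1, hiP⟩ : Fin (T+1)):ℕ)):ℝ) = ((i:ℕ):ℝ) - 1 := by
          have hr : ((⟨(i:ℕ)-1, hiP⟩ : Fin (T+1)):ℕ) = (i:ℕ) - 1 := rfl
          rw [hr, Nat.cast_sub (by omega : 1 ≤ (i:ℕ))]; norm_num
        rw [hc1, hc2]
        set x := (((i:ℕ):ℝ) + 1) * φ with hxdef
        rw [show (((i:ℕ):ℝ) + 1 + 1) * φ = x + φ by rw [hxdef]; ring]
        rw [show (((i:ℕ):ℝ) - 1 + 1) * φ = x - φ by rw [hxdef]; ring]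
        rw [Real.sin_add, Real.sin_sub]
        ring

set_option maxHeartbeats 1000000 in
lemma S0_spectrum_le (N T : ℕ) (hN : 1 ≤ N) (hT : 1 ≤ T) {μ : ℝ}
    (hμ : μ ∈ spectrum ℝ (Sblock N T 0)) :
    μ ≤ Real.cos (π / (2*T + 3)) := by
  by_contra hlt
  push_neg at hlt
  set φ := π / (2*(T:ℝ) + 3) with hφdef
  have h23 : (0:ℝ) < 2*(T:ℝ) + 3 := by positivity
  have hpi : (2*(T:ℝ) + 3) * φ = π := by rw [hφdef]; field_simp
  have hφpos : 0 < φ := by rw [hφdef]; positivity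
  have hφlt : φ < π / 2 := by
    rw [hφdef, div_lt_div_iff₀ h23 (by norm_num)]
    nlinarith [pi_pos]
  have hd0 : ((0:ℕ):ℝ) / (2 * N) = 0 := by norm_num
  have habs : |μ| ≤ 1 :=
    Sblock_spectrum_abs_le_one hT (by rw [hd0]) (by rw [hd0]; norm_num) hμ
  have hle1 : μ ≤ 1 := le_trans (le_abs_self μ) habs
  rw [matrix_mem_spectrum_iff] at hμ
  obtain ⟨v, hv0, hmv⟩ := hμ
  set w := wext T v with hwdef
  have hrow0 := Sblock_row0 hmv
  rw [← hwdef, hd0, zero_mul, zero_add] at hrow0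
  have hvz : (∀ t, t ≤ T → w t = 0) → False := by
    intro hz
    apply hv0
    funext i
    rw [← wext_eq T v i, ← hwdef]
    simpa using hz (i:ℕ) (by omega)
  by_cases hμ1 : μ = 1
  · -- μ = 1 : impossible for S_0
    subst hμ1
    set f : ℕ → ℝ := fun t => ((t:ℝ) + 1) * w 0 with hfdef
    have h0 : w 0 = f 0 := by simp only [hfdef]; norm_num
    have h1 : w 1 = f 1 := by
      simp only [hfdef, Nat.cast_one]
      linarith [hrow0]
    have hf : ∀ t, 1 ≤ t → f (t+1) = 2*(1:ℝ)*f t - f (t-1) := by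
      intro t h1t
      simp only [hfdef]
      rw [Nat.cast_sub h1t]
      push_cast
      ring
    have hcf : ∀ t, t ≤ T → w t = f t :=
      closed_form h0 h1 (Sblock_rec hmv) hf
    have hrT := Sblock_rowT hT hmv
    rw [← hwdef] at hrT
    rw [hcf T le_rfl, hcf (T-1) (by omega)] at hrT
    have hcT1 : ((T-1:ℕ):ℝ) = (T:ℝ) - 1 := by
      rw [Nat.cast_sub hT, Nat.cast_one]
    rw [hfdef] at hrT
    simp only [hcT1] at hrT
    have hw0 : w 0 = 0 := by
      have := hrT
      nlinarith [this]
    exact hvz (fun t ht => by rw [hcf t ht, hfdef]; simp [hw0])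
  · -- μ < 1
    have hlt1 : μ < 1 := lt_of_le_of_ne hle1 hμ1
    have hm1 : (-1:ℝ) ≤ μ := le_trans (Real.neg_one_le_cos φ) hlt.le
    set θ := Real.arccos μ with hθdef
    have hμcos : Real.cos θ = μ := Real.cos_arccos hm1 hle1
    have hθpos : 0 < θ := by rw [hθdef]; exact Real.arccos_pos.2 hlt1
    have hθlepi : θ ≤ π := by rw [hθdef]; exact Real.arccos_le_pi μ
    have hθlt : θ < φ := by
      by_contra hge
      push_neg at hge
      have := Real.cos_le_cos_of_nonneg_of_le_pi hφpos.le hθlepi hge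
      rw [hμcos] at this
      exact absurd (lt_of_lt_of_le hlt this) (lt_irrefl _)
    have hsθ : 0 < Real.sin θ :=
      Real.sin_pos_of_pos_of_lt_pi hθpos (by nlinarith [pi_pos])
    set c := w 0 / Real.sin θ with hcdef
    set f : ℕ → ℝ := fun t => c * Real.sin (((t:ℝ) + 1) * θ) with hfdef
    have hcw : c * Real.sin θ = w 0 := by
      rw [hcdef, div_mul_cancel₀ _ hsθ.ne']
    have hstep : ∀ x : ℝ, Real.sin (x + θ) = 2*μ*Real.sin x - Real.sin (x - θ) := by
      intro x; rw [sin_step θ x, hμcos]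
    have h0 : w 0 = f 0 := by
      simp only [hfdef, Nat.cast_zero]
      rw [show (0:ℝ) + 1 = 1 by norm_num, one_mul, ← hcw]
    have h1 : w 1 = f 1 := by
      have hf1 : f 1 = 2*μ*(w 0) := by
        simp only [hfdef, Nat.cast_one]
        rw [show ((1:ℝ) + 1) * θ = 2*θ by ring, Real.sin_two_mul, ← hμcos]
        linear_combination 2*Real.cos θ * hcw
      rw [hf1]; linarith [hrow0]
    have hf : ∀ t, 1 ≤ t → f (t+1) = 2*μ*f t - f (t-1) := by
      intro t h1t
      simp only [hfdef]
      have hc1 : ((t+1:ℕ):ℝ) = (t:ℝ)+1 := by push_cast; ring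
      have hc2 : ((t-1:ℕ):ℝ) = (t:ℝ)-1 := by rw [Nat.cast_sub h1t, Nat.cast_one]
      rw [hc1, hc2]
      have h := hstep (((t:ℝ) + 1) * θ)
      rw [show ((t:ℝ)+1)*θ + θ = ((t:ℝ)+1+1)*θ by ring] at h
      rw [show ((t:ℝ)+1)*θ - θ = ((t:ℝ)-1+1)*θ by ring] at h
      rw [h]; ring
    have hcf : ∀ t, t ≤ T → w t = f t :=
      closed_form h0 h1 (Sblock_rec hmv) hf
    have hc0 : c ≠ 0 := by
      intro hc
      exact hvz (fun t ht => by rw [hcf t ht, hfdef]; simp [hc])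
    have hrT := Sblock_rowT hT hmv
    rw [← hwdef] at hrT
    rw [hcf T le_rfl, hcf (T-1) (by omega)] at hrT
    set x := ((T:ℝ) + 1) * θ with hxdef
    have hfT : f T = c * Real.sin x := by simp only [hfdef, hxdef]
    have hfT1 : f (T-1) = c * Real.sin (x - θ) := by
      simp only [hfdef]
      rw [Nat.cast_sub hT, Nat.cast_one]
      rw [show ((T:ℝ)-1+1)*θ = x - θ by rw [hxdef]; ring]
    rw [hfT, hfT1] at hrT
    have E2 : (1/2)*Real.sin x + (1/2)*Real.sin (x-θ) = μ*Real.sin x := by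
      have hc' := mul_left_cancel₀ hc0
        (show c * ((1/2)*Real.sin x + (1/2)*Real.sin (x-θ)) = c * (μ*Real.sin x) by
          linear_combination hrT)
      linear_combination hc'
    have hexp : μ * Real.sin x = 1/2*Real.sin (x+θ) + 1/2*Real.sin (x-θ) := by
      rw [← hμcos, Real.sin_add, Real.sin_sub]; ring
    have hss : Real.sin (x+θ) = Real.sin x := by linarith [E2, hexp]
    have hsin := Real.sin_sub_sin (x+θ) x
    rw [show (x + θ - x)/2 = (1/2)*θ by ring] at hsin
    rw [show (x + θ + x)/2 = ((T:ℝ) + 3/2)*θ by rw [hxdef]; ring] at hsin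
    have hzero : Real.sin ((1/2)*θ) * Real.cos (((T:ℝ)+3/2)*θ) = 0 := by
      linear_combination (1/2)*hss - (1/2)*hsin
    have hs1 : 0 < Real.sin ((1/2)*θ) := by
      apply Real.sin_pos_of_pos_of_lt_pi
      · positivity
      · nlinarith [pi_pos]
    have hs2 : 0 < Real.cos (((T:ℝ)+3/2)*θ) := by
      apply Real.cos_pos_of_mem_Ioo
      constructor
      · nlinarith [pi_pos]
      · have hTc : (0:ℝ) < (T:ℝ) + 3/2 := by positivity
        calc ((T:ℝ)+3/2)*θ < ((T:ℝ)+3/2)*φ := mul_lt_mul_of_pos_left hθlt hTc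
          _ = π/2 := by linear_combination (1/2)*hpi
    nlinarith [hzero, hs1, hs2]

lemma gap_bounds (T' : ℕ) (hT' : 1 ≤ T') :
    (1/2 : ℝ) / (T' : ℝ)^2 ≤ 1 - Real.cos (π / ((T':ℝ)+1)) ∧
    1 - Real.cos (π / ((T':ℝ)+1)) ≤ (π^2/2) / (T':ℝ)^2 := by
  have hu : (1:ℝ) ≤ (T':ℝ) := by exact_mod_cast hT'
  set u := (T':ℝ) with hudef
  have hupos : 0 < u := by linarith
  have hu1 : (0:ℝ) < u + 1 := by linarith
  set x := π / (u+1) with hxdef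
  have hxpos : 0 < x := by rw [hxdef]; positivity
  have hxle : x ≤ π/2 := by
    rw [hxdef, div_le_div_iff₀ hu1 (by norm_num)]
    nlinarith [pi_pos]
  have hhalf : 1 - Real.cos x = 2 * Real.sin (x/2)^2 := by
    have hpy := Real.sin_sq_add_cos_sq (x/2)
    have hc2 := Real.cos_two_mul (x/2)
    rw [show 2*(x/2) = x by ring] at hc2
    linear_combination -hc2 - 2*hpy
  constructor
  · -- lower bound
    have hsin : x/π ≤ Real.sin (x/2) := by
      have h := Real.mul_le_sin (x := x/2) (by positivity) (by linarith)
      calc x/π = 2/π * (x/2) := by ring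
        _ ≤ Real.sin (x/2) := h
    have hxπ : 0 ≤ x/π := by positivity
    have hsq : (x/π)^2 ≤ Real.sin (x/2)^2 := by
      have := pow_le_pow_left₀ hxπ hsin 2
      simpa using this
    have hlow : 2*(x/π)^2 ≤ 1 - Real.cos x := by rw [hhalf]; nlinarith
    have hx2 : (x/π)^2 = 1/(u+1)^2 := by
      rw [hxdef]
      field_simp
    rw [hx2] at hlow
    have hfin : (1/2 : ℝ)/u^2 ≤ 2*(1/(u+1)^2) := by
      rw [div_le_iff₀ (by positivity : (0:ℝ) < u^2)]
      have h4 : (u+1)^2 ≤ 4*u^2 := by nlinarith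
      have hp : (0:ℝ) < (u+1)^2 := by positivity
      rw [show 2*(1/(u+1)^2)*u^2 = 2*u^2/(u+1)^2 by ring, le_div_iff₀ hp]
      nlinarith
    linarith
  · have h1 : 1 - Real.cos x ≤ x^2/2 := by
      have := Real.one_sub_sq_div_two_le_cos (x := x)
      linarith
    have h2 : x^2/2 ≤ (π^2/2)/u^2 := by
      rw [hxdef, div_pow, div_div, div_le_div_iff₀ (by positivity) (by positivity)]
      have husq : u^2 ≤ (u+1)^2 := by nlinarith
      have hm := mul_le_mul_of_nonneg_left husq (sq_nonneg π)
      nlinarith [hm]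
    linarith

/-- block spectral gap of the DQC transfer matrix: `S_N` has largest
eigenvalue `1` with a one-dimensional eigenspace and second-largest eigenvalue
`cos(π/(T+1))`; `S_0` has largest eigenvalue `cos(π/(2T+3))`; and the gap
`1 - cos(π/(T+1))` is `Θ(T⁻²)`. -/
theorem dqc_block_spectral_gap (N T : ℕ) (hN : 1 ≤ N) (hT : 1 ≤ T) :
    ((1 : ℝ) ∈ spectrum ℝ (Sblock N T N) ∧
      (∀ μ ∈ spectrum ℝ (Sblock N T N), μ ≤ 1) ∧
      Module.finrank ℝ (Module.End.eigenspace (Matrix.toLin' (Sblock N T N)) 1) = 1 ∧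
      Real.cos (π / (T + 1)) ∈ spectrum ℝ (Sblock N T N) ∧
      (∀ μ ∈ spectrum ℝ (Sblock N T N), μ ≠ 1 → μ ≤ Real.cos (π / (T + 1)))) ∧
    (Real.cos (π / (2 * T + 3)) ∈ spectrum ℝ (Sblock N T 0) ∧
      (∀ μ ∈ spectrum ℝ (Sblock N T 0), μ ≤ Real.cos (π / (2 * T + 3)))) ∧
    (∃ c₁ c₂ : ℝ, 0 < c₁ ∧ 0 < c₂ ∧ ∀ T' : ℕ, 1 ≤ T' →
      c₁ / (T' : ℝ) ^ 2 ≤ 1 - Real.cos (π / ((T' : ℝ) + 1)) ∧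
      1 - Real.cos (π / ((T' : ℝ) + 1)) ≤ c₂ / (T' : ℝ) ^ 2) := by
  have hNd : (N : ℝ) / (2 * N) = 1/2 := by
    have : (N:ℝ) ≠ 0 := Nat.cast_ne_zero.mpr (by omega)
    field_simp
  refine ⟨⟨?_, ?_, ?_, ?_, ?_⟩, ⟨?_, ?_⟩, ?_⟩
  · rw [matrix_mem_spectrum_iff]
    exact ⟨fun _ => 1, ones_ne_zero T, Sblock_ones N T hN hT⟩
  · intro μ hμ
    have habs := Sblock_spectrum_abs_le_one hT (by rw [hNd]; norm_num) (le_of_eq hNd) hμ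
    exact le_trans (le_abs_self μ) habs
  · exact Sblock_finrank_one N T hN hT
  · exact Sblock_cos_eigen N T hN hT
  · intro μ hμ hne
    exact Sblock_second N T hN hT hμ hne
  · exact S0_sin_eigen N T hT
  · intro μ hμ
    exact S0_spectrum_le N T hN hT hμ
  · refine ⟨1/2, π^2/2, by norm_num, by positivity, fun T' hT' => gap_bounds T' hT'⟩
end
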